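/- Let G₁ and G₂ be connected simple graphs, each on n vertices with m edges, with signless Laplacian spectra μ⁺₁ ≥ ⋯ ≥ μ⁺_n > 0 and λ⁺₁ ≥ ⋯ ≥ λ⁺_n > 0 respectively. If p is a positive integer with p ≥ 2n such that 2m/(p+n) < min(μ⁺_n, λ⁺_n), then LE⁺((G₁ ∪ K̄_p) × K_{p,p}) = LE⁺((G₂ ∪ K̄_p) × K_{p,p}). -/

import Mathlib

open SimpleGraph Matrix Finset

/-- The number of edges of a simple graph. -/
noncomputable def edgeCount {V : Type*} (G : SimpleGraph V) : ℕ := G.edgeSet.ncard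

/-- The Laplacian spectrum of a finite simple graph, as a multiset of real numbers. -/
noncomputable def lapSpec {V : Type*} [Fintype V] (G : SimpleGraph V) : Multiset ℝ := by
  classical
  exact Finset.univ.val.map (G.posSemidef_lapMatrix ℝ).1.eigenvalues

/-- The signless Laplacian matrix `D + A` is Hermitian. -/
theorem signless_isHermitian {V : Type*} [Fintype V] [DecidableEq V] (G : SimpleGraph V)
    [DecidableRel G.Adj] : (G.degMatrix ℝ + G.adjMatrix ℝ).IsHermitian := by
  rw [Matrix.IsHermitian, conjTranspose_eq_transpose_of_trivial]
  exact Matrix.IsSymm.add (isSymm_degMatrix ℝ G) (isSymm_adjMatrix G)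

/-- The signless Laplacian spectrum of a finite simple graph, as a multiset of reals. -/
noncomputable def signlessLapSpec {V : Type*} [Fintype V] (G : SimpleGraph V) : Multiset ℝ := by
  classical
  exact Finset.univ.val.map (signless_isHermitian G).eigenvalues

/-- The Laplacian energy `LE(G) = ∑ |μ_i - 2m/n|`. -/
noncomputable def lapEnergy {V : Type*} [Fintype V] (G : SimpleGraph V) : ℝ :=
  ((lapSpec G).map (fun x => |x - 2 * (edgeCount G : ℝ) / (Fintype.card V : ℝ)|)).sum

/-- The signless Laplacian energy `LE⁺(G) = ∑ |μ⁺_i - 2m/n|`. -/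
noncomputable def signlessLapEnergy {V : Type*} [Fintype V] (G : SimpleGraph V) : ℝ :=
  ((signlessLapSpec G).map (fun x => |x - 2 * (edgeCount G : ℝ) / (Fintype.card V : ℝ)|)).sum

/-- The join `G ∨ H` of two graphs: disjoint union plus all edges between them. -/
def SimpleGraph.join {V W : Type*} (G : SimpleGraph V) (H : SimpleGraph W) :
    SimpleGraph (V ⊕ W) where
  Adj a b :=
    match a, b with
    | Sum.inl u, Sum.inl v => G.Adj u v
    | Sum.inr u, Sum.inr v => H.Adj u v
    | Sum.inl _, Sum.inr _ => True
    | Sum.inr _, Sum.inl _ => True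
  symm := ⟨by rintro (u | u) (v | v) h <;> simp_all [adj_comm]⟩
  loopless := ⟨by rintro (u | u) h <;> simp_all⟩

/-- The tensor (Kronecker) product `G ⊗ H` of two graphs. -/
def SimpleGraph.tensorProd {V W : Type*} (G : SimpleGraph V) (H : SimpleGraph W) :
    SimpleGraph (V × W) where
  Adj a b := G.Adj a.1 b.1 ∧ H.Adj a.2 b.2
  symm := ⟨fun a b h => ⟨h.1.symm, h.2.symm⟩⟩
  loopless := ⟨fun a h => G.irrefl h.1⟩

/-! ### Auxiliary spectral lemmas -/

open Polynomial Kronecker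

section CharPoly
variable {V : Type*} [Fintype V] [DecidableEq V]

lemma myCharpoly_conj {R : Type*} [CommRing R] (P M Q : Matrix V V R)
    (hPQ : P * Q = 1) : (P * M * Q).charpoly = M.charpoly := by
  have key : charmatrix (P * M * Q) = (C : R →+* R[X]).mapMatrix P * charmatrix M
      * (C : R →+* R[X]).mapMatrix Q := by
    rw [charmatrix, charmatrix, mul_sub, sub_mul]
    congr 1
    · have hc := (Matrix.scalar_commute (X : R[X]) (fun r' => Commute.all _ _)
        ((C : R →+* R[X]).mapMatrix Q)).eq
      rw [mul_assoc, hc, ← mul_assoc, ← map_mul ((C : R →+* R[X]).mapMatrix),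
        hPQ, _root_.map_one ((C : R →+* R[X]).mapMatrix), one_mul]
    · rw [← map_mul ((C : R →+* R[X]).mapMatrix), ← map_mul ((C : R →+* R[X]).mapMatrix)]
  rw [Matrix.charpoly, Matrix.charpoly, key, det_mul, det_mul, mul_comm, ← mul_assoc,
    ← det_mul, ← map_mul ((C : R →+* R[X]).mapMatrix), mul_eq_one_comm.mp hPQ,
    _root_.map_one ((C : R →+* R[X]).mapMatrix), det_one, one_mul]

lemma myCharpoly_diagonal {R : Type*} [CommRing R] (d : V → R) :
    (Matrix.diagonal d).charpoly = ∏ i, (X - C (d i)) := by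
  have h : charmatrix (Matrix.diagonal d) = Matrix.diagonal (fun i => X - C (d i)) := by
    ext i j
    by_cases h : i = j
    · subst h; simp [charmatrix_apply, Matrix.diagonal_apply]
    · simp [charmatrix_apply, Matrix.diagonal_apply, h]
  rw [Matrix.charpoly, h, det_diagonal]

omit [DecidableEq V] in
lemma myRoots_prod (f : V → ℝ) : (∏ i, (X - C (f i))).roots = Finset.univ.val.map f := by
  have h : ∏ i, (X - C (f i)) = ((Finset.univ.val.map f).map (fun a => X - C a)).prod := by
    rw [Multiset.map_map]; rfl
  rw [h, Polynomial.roots_multiset_prod_X_sub_C]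

lemma charpoly_roots_of_conj_diag {A P Q : Matrix V V ℝ} {d : V → ℝ}
    (hPQ : P * Q = 1) (hA' : A = P * Matrix.diagonal d * Q) :
    A.charpoly.roots = Finset.univ.val.map d := by
  rw [hA', myCharpoly_conj P _ Q hPQ, myCharpoly_diagonal, myRoots_prod]

lemma eig_multiset_eq {A : Matrix V V ℝ} (hA : A.IsHermitian)
    {P Q : Matrix V V ℝ} {d : V → ℝ} (hPQ : P * Q = 1)
    (hA' : A = P * Matrix.diagonal d * Q) :
    Finset.univ.val.map hA.eigenvalues = Finset.univ.val.map d := by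
  have h1 : A.charpoly.roots = Finset.univ.val.map hA.eigenvalues := by
    refine charpoly_roots_of_conj_diag
      (Matrix.mem_unitaryGroup_iff.mp (hA.eigenvectorUnitary).2) ?_
    have h := hA.spectral_theorem
    rwa [RCLike.ofReal_real_eq_id, Function.id_comp] at h
  rw [← h1, charpoly_roots_of_conj_diag hPQ hA']

lemma trace_of_conj_diag {A P Q : Matrix V V ℝ} {d : V → ℝ}
    (hPQ : P * Q = 1) (hA' : A = P * Matrix.diagonal d * Q) :
    A.trace = ∑ i, d i := by
  rw [hA', Matrix.trace_mul_cycle, mul_eq_one_comm.mp hPQ, one_mul,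
    Matrix.trace_diagonal]

end CharPoly

section Graphs
variable {V : Type*} [Fintype V]

lemma Q_inst_eq (G : SimpleGraph V) {ft : Fintype V} (i1 i2 : DecidableEq V)
    (h1 h2 : DecidableRel G.Adj) :
    (@SimpleGraph.degMatrix V ℝ ft G h1 i1 _ + @SimpleGraph.adjMatrix ℝ V G h1 _ _)
      = (@SimpleGraph.degMatrix V ℝ ft G h2 i2 _ + @SimpleGraph.adjMatrix ℝ V G h2 _ _) := by
  congr!

lemma eig_map_congr {A B : Matrix V V ℝ} (i1 i2 : DecidableEq V)
    (hA : A.IsHermitian) (hB : B.IsHermitian) (h : A = B) :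
    Finset.univ.val.map (@Matrix.IsHermitian.eigenvalues ℝ _ V _ A i1 hA)
      = Finset.univ.val.map (@Matrix.IsHermitian.eigenvalues ℝ _ V _ B i2 hB) := by
  subst h
  rw [Subsingleton.elim i1 i2]

lemma signlessLapSpec_eq_generic [i : DecidableEq V] (G : SimpleGraph V)
    [h : DecidableRel G.Adj] :
    signlessLapSpec G = Finset.univ.val.map (signless_isHermitian G).eigenvalues := by
  unfold signlessLapSpec
  exact eig_map_congr _ _ _ _ (Q_inst_eq G _ _ _ _)

lemma signlessLapSpec_eq_of [DecidableEq V] (G : SimpleGraph V) [DecidableRel G.Adj]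
    {P Q : Matrix V V ℝ} {d : V → ℝ} (hPQ : P * Q = 1)
    (hA' : G.degMatrix ℝ + G.adjMatrix ℝ = P * Matrix.diagonal d * Q) :
    signlessLapSpec G = Finset.univ.val.map d := by
  rw [signlessLapSpec_eq_generic G]
  exact eig_multiset_eq _ hPQ hA'

lemma degree_cast_eq_sum [DecidableEq V] (G : SimpleGraph V)
    [DecidableRel G.Adj] (v : V) :
    (G.degree v : ℝ) = ∑ w, G.adjMatrix ℝ v w := by
  simp [adjMatrix_apply, Finset.sum_boole, SimpleGraph.degree, neighborFinset_eq_filter]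

lemma edgeCount_eq_card [DecidableEq V] (G : SimpleGraph V) [DecidableRel G.Adj]
    [Fintype G.edgeSet] : edgeCount G = G.edgeFinset.card := by
  rw [edgeCount, ← Set.ncard_coe_finset, coe_edgeFinset]

lemma trace_Q [DecidableEq V] (G : SimpleGraph V) [DecidableRel G.Adj] :
    (G.degMatrix ℝ + G.adjMatrix ℝ).trace = 2 * (edgeCount G : ℝ) := by
  classical
  rw [Matrix.trace_add, trace_adjMatrix, add_zero, SimpleGraph.degMatrix,
    Matrix.trace_diagonal, edgeCount_eq_card G]
  rw [show ∑ i, ((G.degree i : ℝ)) = ((∑ i, G.degree i : ℕ) : ℝ) by push_cast; ring]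
  rw [G.sum_degrees_eq_twice_card_edges]
  push_cast; ring

lemma signlessLapSpec_sum (G : SimpleGraph V) :
    (signlessLapSpec G).sum = 2 * (edgeCount G : ℝ) := by
  classical
  rw [signlessLapSpec_eq_generic G]
  have hA := signless_isHermitian G
  have hsp := hA.spectral_theorem
  rw [RCLike.ofReal_real_eq_id, Function.id_comp] at hsp
  have h1 : (Finset.univ.val.map hA.eigenvalues).sum = ∑ i, hA.eigenvalues i := rfl
  rw [h1, ← trace_of_conj_diag (Matrix.mem_unitaryGroup_iff.mp (hA.eigenvectorUnitary).2) hsp,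
    trace_Q]

lemma eig_lt_bound [DecidableEq V] (G : SimpleGraph V)
    [DecidableRel G.Adj] {x : ℝ} (hx : x ∈ signlessLapSpec G) :
    x < 2 * (Fintype.card V : ℝ) := by
  rw [signlessLapSpec_eq_generic G] at hx
  obtain ⟨j, -, rfl⟩ := Multiset.mem_map.mp hx
  set hA := signless_isHermitian G with hAdef
  have hv := hA.mulVec_eigenvectorBasis j
  have hvne : (⇑(hA.eigenvectorBasis j) : V → ℝ) ≠ 0 := by
    have hne := hA.eigenvectorBasis.orthonormal.ne_zero j
    intro hc; apply hne; ext k; exact congrFun hc k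
  have hev : Module.End.HasEigenvalue
      (Matrix.toLin' (G.degMatrix ℝ + G.adjMatrix ℝ)) (hA.eigenvalues j) :=
    Module.End.hasEigenvalue_of_hasEigenvector
      ⟨Module.End.mem_eigenspace_iff.mpr (by rw [Matrix.toLin'_apply, hv]), hvne⟩
  obtain ⟨k, hk⟩ := eigenvalue_mem_ball hev
  rw [Metric.mem_closedBall, Real.dist_eq] at hk
  have hdiag : (G.degMatrix ℝ + G.adjMatrix ℝ) k k = (G.degree k : ℝ) := by
    simp [SimpleGraph.degMatrix, adjMatrix_apply]
  have hrow : (∑ l ∈ Finset.univ.erase k, ‖(G.degMatrix ℝ + G.adjMatrix ℝ) k l‖)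
      = (G.degree k : ℝ) := by
    have h1 : ∀ l ∈ Finset.univ.erase k, ‖(G.degMatrix ℝ + G.adjMatrix ℝ) k l‖
        = G.adjMatrix ℝ k l := by
      intro l hl
      have hlk : l ≠ k := (Finset.mem_erase.mp hl).1
      simp [SimpleGraph.degMatrix, Matrix.diagonal_apply, (Ne.symm hlk), adjMatrix_apply]
      split_ifs <;> simp
    rw [Finset.sum_congr rfl h1, Finset.sum_erase_eq_sub (Finset.mem_univ k),
      ← degree_cast_eq_sum]
    simp
  rw [hdiag, hrow] at hk
  have hdeg : (G.degree k : ℝ) < (Fintype.card V : ℝ) := by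
    exact_mod_cast G.degree_lt_card_verts k
  have h2 := abs_le.mp hk
  linarith [h2.2]

end Graphs

section FmatLayer
variable (p : ℕ) [NeZero p]

noncomputable def Jmat : Matrix (Fin p) (Fin p) ℝ := Matrix.of fun _ _ => 1
noncomputable def Fw : Matrix (Fin p) (Fin p) ℝ := Matrix.of fun _ j => if j = 0 then 1 else 0
noncomputable def Fu : Matrix (Fin p) (Fin p) ℝ := Matrix.of fun i _ => if i = 0 then 1 else 0
noncomputable def Fe : Matrix (Fin p) (Fin p) ℝ :=
  Matrix.of fun i j => if i = 0 ∧ j = 0 then 1 else 0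
noncomputable def Fmat : Matrix (Fin p) (Fin p) ℝ :=
  Matrix.of fun i j => if j = 0 then 1 else (if i = 0 then (1:ℝ) else 0) - (if i = j then 1 else 0)
noncomputable def Finv : Matrix (Fin p) (Fin p) ℝ := (p:ℝ)⁻¹ • Jmat p - 1 + Fe p
noncomputable def Wd : Matrix (Fin p) (Fin p) ℝ :=
  Matrix.diagonal (fun j => if j = 0 then (1:ℝ) else 0)

lemma Fmat_eq : Fmat p = Fw p + Fu p - 1 := by
  ext i j
  by_cases hj : j = 0 <;> by_cases hi : i = 0 <;> by_cases hij : i = j <;>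
    simp_all [Fmat, Fw, Fu, Matrix.one_apply]

lemma FwJ : Fw p * Jmat p = Jmat p := by
  ext i j; simp [Matrix.mul_apply, Fw, Jmat]

lemma FuJ : Fu p * Jmat p = (p:ℝ) • Fu p := by
  ext i j; simp [Matrix.mul_apply, Fu, Jmat, Finset.sum_ite_eq, mul_comm]

lemma FwFe : Fw p * Fe p = Fw p := by
  ext i j; simp [Matrix.mul_apply, Fw, Fe, ite_and]

lemma FuFe : Fu p * Fe p = Fe p := by
  ext i j
  by_cases hi : i = 0 <;> by_cases hj : j = 0 <;>
    simp [Matrix.mul_apply, Fu, Fe, ite_and, hi, hj]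

lemma JF : Jmat p * Fmat p = (p:ℝ) • Fw p := by
  ext i j
  by_cases hj : j = 0 <;>
    simp [Matrix.mul_apply, Fmat, Jmat, Fw, hj, Finset.sum_sub_distrib]

lemma FWd : Fmat p * Wd p = Fw p := by
  ext i j
  by_cases hj : j = 0 <;> simp [Wd, Matrix.mul_diagonal, Fmat, Fw, hj]

lemma pR_ne_zero : ((p:ℝ)) ≠ 0 := by
  have := NeZero.ne p
  positivity

lemma FFinv : Fmat p * Finv p = 1 := by
  rw [Fmat_eq, Finv, mul_add, mul_sub, Matrix.mul_smul, Matrix.mul_one]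
  rw [sub_mul, add_mul, FwJ, FuJ, Matrix.one_mul]
  rw [sub_mul, add_mul, FwFe, FuFe, Matrix.one_mul]
  rw [show Jmat p + (p:ℝ) • Fu p - Jmat p = (p:ℝ) • Fu p by abel]
  rw [smul_smul, inv_mul_cancel₀ (pR_ne_zero p), one_smul]
  abel

lemma FinvF : Finv p * Fmat p = 1 := mul_eq_one_comm.mp (FFinv p)

noncomputable def PK : Matrix (Fin p ⊕ Fin p) (Fin p ⊕ Fin p) ℝ :=
  Matrix.fromBlocks (Fmat p) (Fmat p) (Fmat p) (-(Fmat p))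
noncomputable def PKinv : Matrix (Fin p ⊕ Fin p) (Fin p ⊕ Fin p) ℝ :=
  (2:ℝ)⁻¹ • Matrix.fromBlocks (Finv p) (Finv p) (Finv p) (-(Finv p))
noncomputable def dK : Fin p ⊕ Fin p → ℝ :=
  Sum.elim (fun j => if j = 0 then 2*(p:ℝ) else (p:ℝ)) (fun j => if j = 0 then 0 else (p:ℝ))

lemma PK_mul_PKinv : PK p * PKinv p = 1 := by
  rw [PK, PKinv, Matrix.mul_smul, Matrix.fromBlocks_multiply]
  rw [FFinv p, show Fmat p * -Finv p = -(1 : Matrix (Fin p) (Fin p) ℝ) by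
      rw [Matrix.mul_neg, FFinv],
    show -Fmat p * Finv p = -(1 : Matrix (Fin p) (Fin p) ℝ) by rw [Matrix.neg_mul, FFinv],
    show -Fmat p * -Finv p = (1 : Matrix (Fin p) (Fin p) ℝ) by
      rw [Matrix.neg_mul, Matrix.mul_neg, neg_neg, FFinv]]
  rw [show (1 : Matrix (Fin p) (Fin p) ℝ) + 1 = (2:ℝ) • 1 by rw [two_smul],
    show (1 : Matrix (Fin p) (Fin p) ℝ) + -1 = 0 by abel]
  rw [show (0 : Matrix (Fin p) (Fin p) ℝ) = (2:ℝ) • 0 from (smul_zero _).symm]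
  rw [← Matrix.fromBlocks_smul, smul_smul, inv_mul_cancel₀ (two_ne_zero), one_smul]
  exact Matrix.fromBlocks_one

lemma diagD1 : Matrix.diagonal (fun j : Fin p => if j = 0 then 2*(p:ℝ) else (p:ℝ))
    = (p:ℝ) • (1 : Matrix (Fin p) (Fin p) ℝ) + (p:ℝ) • Wd p := by
  ext i j
  by_cases hij : i = j
  · subst hij
    by_cases hi : i = 0 <;>
      simp [Wd, Matrix.one_apply, Matrix.diagonal_apply, hi] <;> ring
  · simp [Wd, Matrix.one_apply, Matrix.diagonal_apply, hij]


lemma diagD2 : Matrix.diagonal (fun j : Fin p => if j = 0 then (0:ℝ) else (p:ℝ))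
    = (p:ℝ) • (1 : Matrix (Fin p) (Fin p) ℝ) - (p:ℝ) • Wd p := by
  ext i j
  by_cases hij : i = j
  · subst hij
    by_cases hi : i = 0 <;>
      simp [Wd, Matrix.one_apply, Matrix.diagonal_apply, hi]
  · simp [Wd, Matrix.one_apply, Matrix.diagonal_apply, hij]

lemma FD1 : Fmat p * Matrix.diagonal (fun j : Fin p => if j = 0 then 2*(p:ℝ) else (p:ℝ))
    = (p:ℝ) • Fmat p + (p:ℝ) • Fw p := by
  rw [diagD1, mul_add, Matrix.mul_smul, Matrix.mul_smul, Matrix.mul_one, FWd]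

lemma FD2 : Fmat p * Matrix.diagonal (fun j : Fin p => if j = 0 then (0:ℝ) else (p:ℝ))
    = (p:ℝ) • Fmat p - (p:ℝ) • Fw p := by
  rw [diagD2, mul_sub, Matrix.mul_smul, Matrix.mul_smul, Matrix.mul_one, FWd]

lemma QK_PK : Matrix.fromBlocks ((p:ℝ) • 1) (Jmat p) (Jmat p) ((p:ℝ) • 1) * PK p
    = PK p * Matrix.diagonal (dK p) := by
  rw [show Matrix.diagonal (dK p) = Matrix.fromBlocks
      (Matrix.diagonal (fun j : Fin p => if j = 0 then 2*(p:ℝ) else (p:ℝ))) 0 0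
      (Matrix.diagonal (fun j : Fin p => if j = 0 then (0:ℝ) else (p:ℝ)))
      from (Matrix.fromBlocks_diagonal _ _).symm]
  rw [PK, Matrix.fromBlocks_multiply, Matrix.fromBlocks_multiply]
  simp only [Matrix.mul_zero, Matrix.zero_mul, add_zero, zero_add, Matrix.smul_mul,
    Matrix.one_mul, Matrix.mul_neg, Matrix.neg_mul, JF, FD1, FD2]
  rw [neg_sub ((p:ℝ) • Fmat p)]
  congr 1 <;> abel

lemma QK_diag : Matrix.fromBlocks ((p:ℝ) • 1) (Jmat p) (Jmat p) ((p:ℝ) • 1)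
    = PK p * Matrix.diagonal (dK p) * PKinv p := by
  have h := congrArg (fun M => M * PKinv p) (QK_PK p)
  simpa [mul_assoc, PK_mul_PKinv p] using h


lemma QK_eq (p : ℕ) [NeZero p]
    [DecidableRel (completeBipartiteGraph (Fin p) (Fin p)).Adj] :
    (completeBipartiteGraph (Fin p) (Fin p)).degMatrix ℝ
      + (completeBipartiteGraph (Fin p) (Fin p)).adjMatrix ℝ
      = Matrix.fromBlocks ((p:ℝ) • 1) (Jmat p) (Jmat p) ((p:ℝ) • 1) := by
  have hadj : (completeBipartiteGraph (Fin p) (Fin p)).adjMatrix ℝ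
      = Matrix.fromBlocks 0 (Jmat p) (Jmat p) 0 := by
    ext (i|i) (j|j) <;> simp [adjMatrix_apply, Jmat]
  have hdeg : ∀ x, ((completeBipartiteGraph (Fin p) (Fin p)).degree x : ℝ) = (p:ℝ) := by
    rintro (u|u) <;>
    · rw [degree_cast_eq_sum, hadj]
      simp [Fintype.sum_sum_type, Jmat]
  have hdm : (completeBipartiteGraph (Fin p) (Fin p)).degMatrix ℝ
      = Matrix.fromBlocks ((p:ℝ) • 1) 0 0 ((p:ℝ) • 1) := by
    rw [SimpleGraph.degMatrix]
    ext x y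
    by_cases hxy : x = y
    · subst hxy
      rw [Matrix.diagonal_apply_eq, hdeg x]
      rcases x with (u|u) <;> simp [Matrix.one_apply]
    · rw [Matrix.diagonal_apply_ne _ hxy]
      rcases x with (u|u) <;> rcases y with (v|v) <;>
        simp_all [Matrix.one_apply, Matrix.diagonal_apply]
  rw [hadj, hdm, Matrix.fromBlocks_add]
  simp

lemma Q_disjointSum_bot {α : Type*} [Fintype α] [DecidableEq α] (p : ℕ)
    (G : SimpleGraph α) [DecidableRel G.Adj]
    [DecidableRel (G ⊕g (⊥ : SimpleGraph (Fin p))).Adj] :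
    (G ⊕g (⊥ : SimpleGraph (Fin p))).degMatrix ℝ
      + (G ⊕g (⊥ : SimpleGraph (Fin p))).adjMatrix ℝ =
      Matrix.fromBlocks (G.degMatrix ℝ + G.adjMatrix ℝ) 0 0 0 := by
  have hadj : (G ⊕g (⊥ : SimpleGraph (Fin p))).adjMatrix ℝ
      = Matrix.fromBlocks (G.adjMatrix ℝ) 0 0 0 := by
    ext (i|i) (j|j) <;> simp [adjMatrix_apply, SimpleGraph.sum_adj]
  have hdeg : ∀ x, ((G ⊕g (⊥ : SimpleGraph (Fin p))).degree x : ℝ)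
      = Sum.elim (fun u => (G.degree u : ℝ)) (fun _ : Fin p => (0:ℝ)) x := by
    intro x
    rw [show ((G ⊕g (⊥ : SimpleGraph (Fin p))).degree x : ℝ)
        = ∑ w, (G ⊕g (⊥ : SimpleGraph (Fin p))).adjMatrix ℝ x w from by
      rw [← degree_cast_eq_sum]; congr 2; exact Subsingleton.elim _ _]
    revert x
    rintro (u|u) <;>
    · rw [hadj]
      simp [Fintype.sum_sum_type, SimpleGraph.degree, neighborFinset_eq_filter,
        adjMatrix_apply, Finset.sum_boole]
  have hdm : (G ⊕g (⊥ : SimpleGraph (Fin p))).degMatrix ℝ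
      = Matrix.fromBlocks (G.degMatrix ℝ) 0 0 0 := by
    rw [SimpleGraph.degMatrix]
    trans Matrix.diagonal (Sum.elim (fun u => (G.degree u : ℝ)) (fun _ : Fin p => (0:ℝ)))
    · congr 1; funext x; rw [← hdeg x]; congr 2; exact Subsingleton.elim _ _
    rw [← Matrix.fromBlocks_diagonal, Matrix.diagonal_zero]
    rfl
  rw [hadj, hdm, Matrix.fromBlocks_add]
  simp


lemma Q_boxProd {α β : Type*} [Fintype α] [Fintype β] [DecidableEq α] [DecidableEq β]
    (G : SimpleGraph α) (H : SimpleGraph β) [DecidableRel G.Adj] [DecidableRel H.Adj]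
    [DecidableRel (G □ H).Adj] :
    (G □ H).degMatrix ℝ + (G □ H).adjMatrix ℝ =
      (G.degMatrix ℝ + G.adjMatrix ℝ) ⊗ₖ (1 : Matrix β β ℝ) +
      (1 : Matrix α α ℝ) ⊗ₖ (H.degMatrix ℝ + H.adjMatrix ℝ) := by
  ext ⟨u,v⟩ ⟨u',v'⟩
  by_cases h1 : u = u' <;> by_cases h2 : v = v'
  · subst h1; subst h2
    simp [SimpleGraph.degMatrix, Matrix.diagonal_apply, adjMatrix_apply, Matrix.one_apply,
      degree_boxProd]
  · subst h1
    by_cases ha : H.Adj v v' <;>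
      simp [SimpleGraph.degMatrix, Matrix.diagonal_apply, adjMatrix_apply, Matrix.one_apply,
        Prod.ext_iff, h2, ha]
  · subst h2
    by_cases ha : G.Adj u u' <;>
      simp [SimpleGraph.degMatrix, Matrix.diagonal_apply, adjMatrix_apply, Matrix.one_apply,
        Prod.ext_iff, h1, ha]
  · simp [SimpleGraph.degMatrix, Matrix.diagonal_apply, adjMatrix_apply, Matrix.one_apply,
      Prod.ext_iff, h1, h2]


/-! ### Main energy computation -/

lemma sum_ite_fin (p : ℕ) [NeZero p] (a b : ℝ) :
    ∑ j : Fin p, (if j = 0 then a else b) = a + ((p:ℝ) - 1) * b := by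
  rw [← Finset.add_sum_erase _ _ (Finset.mem_univ (0 : Fin p)), if_pos rfl]
  congr 1
  rw [Finset.sum_congr rfl (fun j hj => if_neg (Finset.mem_erase.mp hj).1),
    Finset.sum_const, Finset.card_erase_of_mem (Finset.mem_univ _)]
  simp only [Finset.card_univ, Fintype.card_fin, nsmul_eq_mul]
  have hp : 1 ≤ p := Nat.one_le_iff_ne_zero.mpr (NeZero.ne p)
  push_cast [Nat.cast_sub hp]
  ring

lemma big_energy (n m p : ℕ) (hn : 1 ≤ n) (hp : 0 < p) (hpn : 2 * n ≤ p)
    (G : SimpleGraph (Fin n)) (hm : edgeCount G = m)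
    (hlb : ∀ x ∈ signlessLapSpec G, 2 * (m:ℝ) / ((p:ℝ) + (n:ℝ)) < x) :
    signlessLapEnergy ((G ⊕g (⊥ : SimpleGraph (Fin p)))
        □ (completeBipartiteGraph (Fin p) (Fin p)))
      = 2*(p:ℝ)*(n:ℝ)
        + 2*((p:ℝ)-1)*(2*(m:ℝ) - (n:ℝ)*(2*(m:ℝ)/((p:ℝ)+(n:ℝ))))
        + 2*(p:ℝ)^2 + 2*((p:ℝ)-1)*(p:ℝ)*(2*(m:ℝ)/((p:ℝ)+(n:ℝ))) := by
  classical
  haveI : NeZero p := ⟨hp.ne'⟩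
  set c : ℝ := 2*(m:ℝ)/((p:ℝ)+(n:ℝ)) with hc
  have hnR : (0:ℝ) < (n:ℝ) := by exact_mod_cast hn
  have hpR : (0:ℝ) < (p:ℝ) := by exact_mod_cast hp
  have hc0 : 0 ≤ c := by
    rw [hc]; positivity
  -- spectral theorem for G
  have hQG := signless_isHermitian G
  have hsp := hQG.spectral_theorem
  rw [RCLike.ofReal_real_eq_id, Function.id_comp] at hsp
  set U : Matrix (Fin n) (Fin n) ℝ := (hQG.eigenvectorUnitary : Matrix (Fin n) (Fin n) ℝ)
    with hUdef
  have hU : U * star U = 1 := Matrix.mem_unitaryGroup_iff.mp (hQG.eigenvectorUnitary).2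
  set eig : Fin n → ℝ := hQG.eigenvalues with heig
  -- eigenvalue bounds
  have hig : ∀ i, c < eig i ∧ eig i < (p:ℝ) := by
    intro i
    have hmem : eig i ∈ signlessLapSpec G := by
      rw [signlessLapSpec_eq_generic G]
      exact Multiset.mem_map_of_mem _ (Finset.mem_univ_val _)
    constructor
    · exact hlb _ hmem
    · have h1 := eig_lt_bound G hmem
      have h2 : (2:ℝ) * (Fintype.card (Fin n) : ℝ) ≤ (p:ℝ) := by
        rw [Fintype.card_fin]
        exact_mod_cast hpn
      linarith
  have hcp : c < (p:ℝ) := by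
    have h := hig ⟨0, hn⟩
    linarith [h.1, h.2]
  -- sum of eigenvalues
  have hsumeig : ∑ i, eig i = 2*(m:ℝ) := by
    have h2m := signlessLapSpec_sum G
    rw [signlessLapSpec_eq_generic G] at h2m
    rw [hm] at h2m
    exact h2m
  -- diagonalization of Q(G ⊕g ⊥)
  set PH : Matrix (Fin n ⊕ Fin p) (Fin n ⊕ Fin p) ℝ :=
    Matrix.fromBlocks U 0 0 1 with hPHdef
  set PHinv : Matrix (Fin n ⊕ Fin p) (Fin n ⊕ Fin p) ℝ :=
    Matrix.fromBlocks (star U) 0 0 1 with hPHinvdef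
  set dH : Fin n ⊕ Fin p → ℝ := Sum.elim eig (fun _ => (0:ℝ)) with hdHdef
  have hPH : PH * PHinv = 1 := by
    rw [hPHdef, hPHinvdef, Matrix.fromBlocks_multiply]
    simpa [hU] using Matrix.fromBlocks_one
  have hQH : (G ⊕g (⊥ : SimpleGraph (Fin p))).degMatrix ℝ
      + (G ⊕g (⊥ : SimpleGraph (Fin p))).adjMatrix ℝ
      = PH * Matrix.diagonal dH * PHinv := by
    rw [Q_disjointSum_bot p G, hPHdef, hPHinvdef, hdHdef, ← Matrix.fromBlocks_diagonal,
      Matrix.fromBlocks_multiply, Matrix.fromBlocks_multiply]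
    simp only [Matrix.mul_zero, Matrix.zero_mul, Matrix.mul_one, Matrix.one_mul,
      add_zero, zero_add, Matrix.diagonal_zero]
    rw [hsp]; rfl
  -- diagonalization of Q(K_{p,p})
  have hQK : (completeBipartiteGraph (Fin p) (Fin p)).degMatrix ℝ
      + (completeBipartiteGraph (Fin p) (Fin p)).adjMatrix ℝ
      = PK p * Matrix.diagonal (dK p) * PKinv p := by
    rw [QK_eq p]; exact QK_diag p
  -- big graph
  set dbig : (Fin n ⊕ Fin p) × (Fin p ⊕ Fin p) → ℝ := fun x => dH x.1 + dK p x.2 with hdbig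
  have hbigP : (PH ⊗ₖ PK p) * (PHinv ⊗ₖ PKinv p) = 1 := by
    rw [← Matrix.mul_kronecker_mul, hPH, PK_mul_PKinv, Matrix.one_kronecker_one]
  have hdiagbig : Matrix.diagonal dH ⊗ₖ (1 : Matrix (Fin p ⊕ Fin p) (Fin p ⊕ Fin p) ℝ)
      + (1 : Matrix (Fin n ⊕ Fin p) (Fin n ⊕ Fin p) ℝ) ⊗ₖ Matrix.diagonal (dK p)
      = Matrix.diagonal dbig := by
    rw [show (1 : Matrix (Fin p ⊕ Fin p) (Fin p ⊕ Fin p) ℝ)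
        = Matrix.diagonal (fun _ => (1:ℝ)) from Matrix.diagonal_one.symm,
      show (1 : Matrix (Fin n ⊕ Fin p) (Fin n ⊕ Fin p) ℝ)
        = Matrix.diagonal (fun _ => (1:ℝ)) from Matrix.diagonal_one.symm,
      Matrix.diagonal_kronecker_diagonal, Matrix.diagonal_kronecker_diagonal,
      Matrix.diagonal_add]
    congr 1
    funext x
    simp [hdbig]
  have hQbig : ((G ⊕g (⊥ : SimpleGraph (Fin p)))
        □ (completeBipartiteGraph (Fin p) (Fin p))).degMatrix ℝ
      + ((G ⊕g (⊥ : SimpleGraph (Fin p)))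
        □ (completeBipartiteGraph (Fin p) (Fin p))).adjMatrix ℝ
      = (PH ⊗ₖ PK p) * Matrix.diagonal dbig * (PHinv ⊗ₖ PKinv p) := by
    rw [Q_boxProd, hQH, hQK, ← hdiagbig, mul_add, add_mul]
    congr 1
    · rw [← Matrix.mul_kronecker_mul, ← Matrix.mul_kronecker_mul, Matrix.mul_one,
        PK_mul_PKinv]
    · rw [← Matrix.mul_kronecker_mul, ← Matrix.mul_kronecker_mul, Matrix.mul_one,
        hPH]
  have hspec : signlessLapSpec ((G ⊕g (⊥ : SimpleGraph (Fin p)))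
      □ (completeBipartiteGraph (Fin p) (Fin p))) = Finset.univ.val.map dbig :=
    signlessLapSpec_eq_of _ hbigP hQbig
  -- sum of dbig
  have hSdK : ∑ j : Fin p ⊕ Fin p, dK p j = 2*(p:ℝ)^2 := by
    rw [Fintype.sum_sum_type]
    simp only [dK, Sum.elim_inl, Sum.elim_inr]
    rw [sum_ite_fin, sum_ite_fin]
    ring
  have hSdH : ∑ i : Fin n ⊕ Fin p, dH i = 2*(m:ℝ) := by
    rw [Fintype.sum_sum_type]
    simp only [hdHdef, Sum.elim_inl, Sum.elim_inr]
    rw [hsumeig]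
    simp
  have hSd : ∑ x : (Fin n ⊕ Fin p) × (Fin p ⊕ Fin p), dbig x
      = 2*(p:ℝ)*(2*(m:ℝ)) + ((n:ℝ)+(p:ℝ))*(2*(p:ℝ)^2) := by
    rw [Fintype.sum_prod_type]
    have hrow : ∀ i : Fin n ⊕ Fin p, (∑ j : Fin p ⊕ Fin p, dbig (i, j))
        = 2*(p:ℝ) * dH i + 2*(p:ℝ)^2 := by
      intro i
      simp only [hdbig]
      rw [Finset.sum_add_distrib, Finset.sum_const, hSdK, Finset.card_univ]
      simp only [Fintype.card_sum, Fintype.card_fin, nsmul_eq_mul]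
      push_cast
      ring
    rw [Finset.sum_congr rfl (fun i _ => hrow i), Finset.sum_add_distrib,
      ← Finset.mul_sum, hSdH, Finset.sum_const, Finset.card_univ]
    simp only [Fintype.card_sum, Fintype.card_fin, nsmul_eq_mul]
    push_cast
    ring
  -- edge count of big graph
  have hec : 2 * ((edgeCount ((G ⊕g (⊥ : SimpleGraph (Fin p)))
      □ (completeBipartiteGraph (Fin p) (Fin p)))) : ℝ)
      = 2*(p:ℝ)*(2*(m:ℝ)) + ((n:ℝ)+(p:ℝ))*(2*(p:ℝ)^2) := by
    rw [← signlessLapSpec_sum, hspec, ← hSd]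
    rfl
  -- the mean
  have hcard : ((Fintype.card ((Fin n ⊕ Fin p) × (Fin p ⊕ Fin p))) : ℝ)
      = ((n:ℝ)+(p:ℝ))*(2*(p:ℝ)) := by
    simp only [Fintype.card_prod, Fintype.card_sum, Fintype.card_fin]
    push_cast
    ring
  have hnp : ((n:ℝ)+(p:ℝ)) ≠ 0 := by positivity
  have hcc : 2 * ((edgeCount ((G ⊕g (⊥ : SimpleGraph (Fin p)))
        □ (completeBipartiteGraph (Fin p) (Fin p)))) : ℝ)
      / ((Fintype.card ((Fin n ⊕ Fin p) × (Fin p ⊕ Fin p))) : ℝ) = (p:ℝ) + c := by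
    rw [hec, hcard, hc]
    field_simp
    ring
  -- inner sums
  have inner : ∀ α : ℝ, c < α → α < (p:ℝ) →
      ∑ j : Fin p ⊕ Fin p, |α + dK p j - ((p:ℝ)+c)|
        = 2*(p:ℝ) + 2*((p:ℝ)-1)*(α - c) := by
    intro α h1 h2
    rw [Fintype.sum_sum_type]
    have e1 : ∀ j : Fin p, |α + dK p (Sum.inl j) - ((p:ℝ)+c)|
        = if j = 0 then α + (p:ℝ) - c else α - c := by
      intro j
      simp only [dK, Sum.elim_inl]
      by_cases hj : j = 0
      · rw [if_pos hj, if_pos hj, abs_of_pos (by linarith)]; ring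
      · rw [if_neg hj, if_neg hj, abs_of_pos (by linarith)]; ring
    have e2 : ∀ j : Fin p, |α + dK p (Sum.inr j) - ((p:ℝ)+c)|
        = if j = 0 then (p:ℝ) + c - α else α - c := by
      intro j
      simp only [dK, Sum.elim_inr]
      by_cases hj : j = 0
      · rw [if_pos hj, if_pos hj, abs_of_nonpos (by linarith)]; ring
      · rw [if_neg hj, if_neg hj, abs_of_pos (by linarith)]; ring
    rw [Finset.sum_congr rfl (fun j _ => e1 j), Finset.sum_congr rfl (fun j _ => e2 j),
      sum_ite_fin, sum_ite_fin]
    ring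
  have innerz : ∑ j : Fin p ⊕ Fin p, |(0:ℝ) + dK p j - ((p:ℝ)+c)|
      = 2*(p:ℝ) + 2*((p:ℝ)-1)*c := by
    rw [Fintype.sum_sum_type]
    have e1 : ∀ j : Fin p, |(0:ℝ) + dK p (Sum.inl j) - ((p:ℝ)+c)|
        = if j = 0 then (p:ℝ) - c else c := by
      intro j
      simp only [dK, Sum.elim_inl]
      by_cases hj : j = 0
      · rw [if_pos hj, if_pos hj, abs_of_nonneg (by linarith)]; ring
      · rw [if_neg hj, if_neg hj, abs_of_nonpos (by linarith)]; ring
    have e2 : ∀ j : Fin p, |(0:ℝ) + dK p (Sum.inr j) - ((p:ℝ)+c)|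
        = if j = 0 then (p:ℝ) + c else c := by
      intro j
      simp only [dK, Sum.elim_inr]
      by_cases hj : j = 0
      · rw [if_pos hj, if_pos hj, abs_of_nonpos (by linarith)]; ring
      · rw [if_neg hj, if_neg hj, abs_of_nonpos (by linarith)]; ring
    rw [Finset.sum_congr rfl (fun j _ => e1 j), Finset.sum_congr rfl (fun j _ => e2 j),
      sum_ite_fin, sum_ite_fin]
    ring
  -- final computation
  unfold signlessLapEnergy
  rw [hspec, Multiset.map_map, hcc]
  rw [show (Multiset.map ((fun x => |x - ((p:ℝ)+c)|) ∘ dbig) Finset.univ.val).sum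
      = ∑ x : (Fin n ⊕ Fin p) × (Fin p ⊕ Fin p), |dbig x - ((p:ℝ)+c)| from rfl]
  rw [Fintype.sum_prod_type, Fintype.sum_sum_type]
  have houter1 : ∀ a : Fin n, (∑ j : Fin p ⊕ Fin p, |dbig (Sum.inl a, j) - ((p:ℝ)+c)|)
      = 2*(p:ℝ) + 2*((p:ℝ)-1)*(eig a - c) := by
    intro a
    have h := inner (eig a) (hig a).1 (hig a).2
    rw [← h]
    apply Finset.sum_congr rfl
    intro j _
    simp [hdbig, hdHdef]
  have houter2 : ∀ b : Fin p, (∑ j : Fin p ⊕ Fin p, |dbig (Sum.inr b, j) - ((p:ℝ)+c)|)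
      = 2*(p:ℝ) + 2*((p:ℝ)-1)*c := by
    intro b
    rw [← innerz]
    apply Finset.sum_congr rfl
    intro j _
    simp [hdbig, hdHdef]
  rw [Finset.sum_congr rfl (fun a _ => houter1 a),
    Finset.sum_congr rfl (fun b _ => houter2 b)]
  rw [Finset.sum_add_distrib, Finset.sum_const, Finset.card_univ, Fintype.card_fin,
    ← Finset.mul_sum, Finset.sum_sub_distrib, hsumeig, Finset.sum_const,
    Finset.card_univ, Fintype.card_fin, Finset.sum_const, Finset.card_univ,
    Fintype.card_fin]
  simp only [nsmul_eq_mul]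
  push_cast
  ring

theorem stmt9 (n m p : ℕ) (hn : 1 ≤ n) (hp : 0 < p) (hpn : 2 * n ≤ p)
    (G₁ G₂ : SimpleGraph (Fin n))
    (hc₁ : G₁.Connected) (hc₂ : G₂.Connected)
    (hm₁ : edgeCount G₁ = m) (hm₂ : edgeCount G₂ = m)
    (μ ν : Fin n → ℝ) (hμmono : Antitone μ) (hνmono : Antitone ν)
    (hμspec : signlessLapSpec G₁ = Finset.univ.val.map μ)
    (hνspec : signlessLapSpec G₂ = Finset.univ.val.map ν)
    (hμpos : 0 < μ ⟨n - 1, by omega⟩) (hνpos : 0 < ν ⟨n - 1, by omega⟩)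
    (hcond : 2 * (m : ℝ) / ((p : ℝ) + (n : ℝ)) < min (μ ⟨n - 1, by omega⟩) (ν ⟨n - 1, by omega⟩)) :
    signlessLapEnergy ((G₁ ⊕g (⊥ : SimpleGraph (Fin p))) □ (completeBipartiteGraph (Fin p) (Fin p))) =
      signlessLapEnergy ((G₂ ⊕g (⊥ : SimpleGraph (Fin p))) □ (completeBipartiteGraph (Fin p) (Fin p))) := by
  have key : ∀ (G : SimpleGraph (Fin n)) (f : Fin n → ℝ), Antitone f →
      signlessLapSpec G = Finset.univ.val.map f →
      (2 * (m:ℝ) / ((p:ℝ)+(n:ℝ)) < f ⟨n-1, by omega⟩) →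
      ∀ x ∈ signlessLapSpec G, 2*(m:ℝ)/((p:ℝ)+(n:ℝ)) < x := by
    intro G f hmono hspec hlt x hx
    rw [hspec] at hx
    obtain ⟨i, -, rfl⟩ := Multiset.mem_map.mp hx
    have hle : f ⟨n-1, by omega⟩ ≤ f i := by
      apply hmono
      have hi := i.isLt
      have h1 : (i : ℕ) ≤ n - 1 := by omega
      exact Fin.le_def.mpr (by simpa using h1)
    linarith
  rw [big_energy n m p hn hp hpn G₁ hm₁
      (key G₁ μ hμmono hμspec (lt_of_lt_of_le hcond (min_le_left _ _))),
    big_energy n m p hn hp hpn G₂ hm₂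
      (key G₂ ν hνmono hνspec (lt_of_lt_of_le hcond (min_le_right _ _)))]
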